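/- For every two integers n and k with 2 ≤ k ≤ n, the generalized k-edge-connectivity of the complete graph K_n equals n − ⌈k/2⌉. -/

import Mathlib

open SimpleGraph

variable {V : Type*}

/-- An `S`-Steiner tree in `G`: a subgraph of `G` that is a tree and contains all of `S`. -/
def IsSteinerTree (G : SimpleGraph V) (S : Set V) (T : G.Subgraph) : Prop :=
  S ⊆ T.verts ∧ T.coe.IsTree

/-- The maximum number of pairwise edge-disjoint `S`-Steiner trees in `G`. -/
noncomputable def steinerEdgeConn (G : SimpleGraph V) (S : Set V) : ℕ :=
  sSup {n : ℕ | ∃ f : Fin n → G.Subgraph, (∀ i, IsSteinerTree G S (f i)) ∧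
    ∀ i j, i ≠ j → Disjoint (f i).edgeSet (f j).edgeSet}

/-- The maximum number of pairwise internally disjoint `S`-Steiner trees in `G`. -/
noncomputable def steinerConn (G : SimpleGraph V) (S : Set V) : ℕ :=
  sSup {n : ℕ | ∃ f : Fin n → G.Subgraph, (∀ i, IsSteinerTree G S (f i)) ∧
    ∀ i j, i ≠ j → Disjoint (f i).edgeSet (f j).edgeSet ∧
      (f i).verts ∩ (f j).verts = S}

/-- The generalized `k`-edge-connectivity `λ_k(G)`. -/
noncomputable def genEdgeConn (G : SimpleGraph V) (k : ℕ) : ℕ :=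
  sInf {m : ℕ | ∃ S : Set V, S.ncard = k ∧ steinerEdgeConn G S = m}

/-- The generalized `k`-connectivity `κ_k(G)`. -/
noncomputable def genConn (G : SimpleGraph V) (k : ℕ) : ℕ :=
  sInf {m : ℕ | ∃ S : Set V, S.ncard = k ∧ steinerConn G S = m}

/-- The edge-connectivity `λ(G)`: the least size of a set of edges whose removal
disconnects the graph. -/
noncomputable def edgeConn (G : SimpleGraph V) : ℕ :=
  sInf {m : ℕ | ∃ M : Set (Sym2 V), M ⊆ G.edgeSet ∧ M.ncard = m ∧
    ¬ (G.deleteEdges M).Connected}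

/-- The vertex-connectivity `κ(G)`: the least size of a set of vertices whose removal
leaves a non-connected graph. -/
noncomputable def vertConn (G : SimpleGraph V) : ℕ :=
  sInf {m : ℕ | ∃ A : Set V, A.ncard = m ∧ ¬ (G.induce (Aᶜ : Set V)).Connected}


/-- The minimum degree `δ(G)` (as the least cardinality of a neighbor set). -/
noncomputable def minDeg (G : SimpleGraph V) : ℕ :=
  sInf {d : ℕ | ∃ v : V, (G.neighborSet v).ncard = d}


section Aux

lemma cycle_two_nbrs {α : Type*} {G : SimpleGraph α} {u : α} {q : G.Walk u u}
    (hq : q.IsCycle) : ∃ a b, a ≠ b ∧ G.Adj u a ∧ G.Adj u b := by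
  cases q with
  | nil => exact absurd hq Walk.IsCycle.not_of_nil
  | @cons _ b₁ _ ha q' =>
    have hb1u : b₁ ≠ u := fun h => G.irrefl (h ▸ ha)
    obtain ⟨b₂, hb, r', hr⟩ := Walk.exists_eq_cons_of_ne (Ne.symm hb1u) q'.reverse
    have hmem : s(u, b₂) ∈ q'.edges := by
      have : s(u, b₂) ∈ q'.reverse.edges := by rw [hr]; simp
      simpa [Walk.edges_reverse] using this
    have hnodup : ((Walk.cons ha q').edges).Nodup := hq.isCircuit.isTrail.edges_nodup
    rw [Walk.edges_cons, List.nodup_cons] at hnodup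
    refine ⟨b₁, b₂, ?_, ha, hb⟩
    rintro rfl
    exact hnodup.1 hmem

lemma isAcyclic_of_nbr_unique {α : Type*} {G : SimpleGraph α} (c d : α)
    (h : ∀ v, v ≠ c → v ≠ d → ∀ w w', G.Adj v w → G.Adj v w' → w = w') :
    G.IsAcyclic := by
  classical
  intro v p hp
  have hlen := hp.three_le_length
  have hnodup := hp.support_nodup
  have hlen' : p.support.tail.length = p.length := by
    have := p.length_support; simp only [List.length_tail, this]; omega
  have : ∃ u ∈ p.support.tail, u ≠ c ∧ u ≠ d := by
    by_contra hcon
    push_neg at hcon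
    have hsub : p.support.tail.toFinset ⊆ ({c, d} : Finset α) := by
      intro x hx
      have h1 := hcon x (List.mem_toFinset.mp hx)
      by_cases hxc : x = c
      · simp [hxc]
      · simp [h1 hxc]
    have hcard := Finset.card_le_card hsub
    rw [List.toFinset_card_of_nodup hnodup] at hcard
    have : ({c, d} : Finset α).card ≤ 2 := Finset.card_insert_le _ _ |>.trans (by simp)
    omega
  obtain ⟨u, hu, huc, hud⟩ := this
  have hu' : u ∈ p.support := List.mem_of_mem_tail hu
  have hq := hp.rotate hu'
  obtain ⟨a, b, hab, ha, hb⟩ := cycle_two_nbrs hq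
  exact hab (h u huc hud a b ha hb)

/-- A double star subgraph of the complete graph: centers `c, d`, every other vertex of
`Vs` attached to `g v` (intended to be `c` or `d`). -/
def dstar {n : ℕ} (c d : Fin n) (g : Fin n → Fin n) (Vs : Set (Fin n)) :
    (⊤ : SimpleGraph (Fin n)).Subgraph where
  verts := Vs
  Adj x y := x ≠ y ∧ x ∈ Vs ∧ y ∈ Vs ∧
    (((x = c ∧ y = d) ∨ (x ≠ c ∧ x ≠ d ∧ y = g x)) ∨
      ((y = c ∧ x = d) ∨ (y ≠ c ∧ y ≠ d ∧ x = g y)))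
  adj_sub := fun h => h.1
  edge_vert := fun h => h.2.1
  symm := ⟨fun x y h => ⟨h.1.symm, h.2.2.1, h.2.1, h.2.2.2.symm⟩⟩

/-- The hypotheses making `dstar` a genuine double star. -/
def DGood {n : ℕ} (c d : Fin n) (g : Fin n → Fin n) (Vs : Set (Fin n)) : Prop :=
  c ∈ Vs ∧ d ∈ Vs ∧ c ≠ d ∧ ∀ v ∈ Vs, v ≠ c → v ≠ d → g v = c ∨ g v = d

lemma dstar_mem_edgeSet {n : ℕ} {c d : Fin n} {g : Fin n → Fin n} {Vs : Set (Fin n)}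
    (hg : DGood c d g Vs) {e : Sym2 (Fin n)} :
    e ∈ (dstar c d g Vs).edgeSet ↔
      e = s(c, d) ∨ ∃ v ∈ Vs, v ≠ c ∧ v ≠ d ∧ e = s(v, g v) := by
  obtain ⟨hc, hd, hcd, hgv⟩ := hg
  constructor
  · intro he
    induction e with
    | h x y =>
      rw [SimpleGraph.Subgraph.mem_edgeSet] at he
      obtain ⟨h1, h2, h3, h4⟩ := he
      rcases h4 with (⟨hx, hy⟩ | ⟨hxc, hxd, hy⟩) | (⟨hy, hx⟩ | ⟨hyc, hyd, hx⟩)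
      · exact Or.inl (by rw [hx, hy])
      · exact Or.inr ⟨x, h2, hxc, hxd, by rw [hy]⟩
      · exact Or.inl (by rw [hx, hy]; exact Sym2.eq_swap)
      · exact Or.inr ⟨y, h3, hyc, hyd, by rw [hx]; exact Sym2.eq_swap⟩
  · rintro (rfl | ⟨v, hv, hvc, hvd, rfl⟩)
    · exact ⟨hcd, hc, hd, Or.inl (Or.inl ⟨rfl, rfl⟩)⟩
    · have hgvm := hgv v hv hvc hvd
      have hgVs : g v ∈ Vs := by rcases hgvm with h | h <;> rw [h] <;> assumption
      have hne : v ≠ g v := by rcases hgvm with h | h <;> rw [h] <;> assumption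
      exact ⟨hne, hv, hgVs, Or.inl (Or.inr ⟨hvc, hvd, rfl⟩)⟩




lemma dstar_isTree {n : ℕ} {c d : Fin n} {g : Fin n → Fin n} {Vs : Set (Fin n)}
    (hg : DGood c d g Vs) : (dstar c d g Vs).coe.IsTree := by
  obtain ⟨hc, hd, hcd, hgv⟩ := hg
  set T := dstar c d g Vs with hT
  constructor
  · -- connected
    have hreach : ∀ x : T.verts, T.coe.Reachable x ⟨c, hc⟩ := by
      rintro ⟨v, hv⟩
      by_cases hvc : v = c
      · subst hvc; exact Reachable.refl _
      · by_cases hvd : v = d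
        · subst hvd
          exact Adj.reachable (by
            show T.Adj v c
            exact ⟨hvc, hv, hc, Or.inr (Or.inl ⟨rfl, rfl⟩)⟩)
        · have hgvm := hgv v hv hvc hvd
          have hgVs : g v ∈ Vs := by rcases hgvm with h | h <;> rw [h] <;> assumption
          have step1 : T.coe.Adj ⟨v, hv⟩ ⟨g v, hgVs⟩ := by
            show T.Adj v (g v)
            have hne : v ≠ g v := by rcases hgvm with h | h <;> rw [h] <;> assumption
            exact ⟨hne, hv, hgVs, Or.inl (Or.inr ⟨hvc, hvd, rfl⟩)⟩
          rcases hgvm with h | h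
          · exact step1.reachable.trans (by rw [show (⟨g v, hgVs⟩ : T.verts) = ⟨c, hc⟩ from Subtype.ext h])
          · refine step1.reachable.trans ?_
            have step2 : T.coe.Adj ⟨g v, hgVs⟩ ⟨c, hc⟩ := by
              show T.Adj (g v) c
              rw [h]
              exact ⟨Ne.symm hcd, hd, hc, Or.inr (Or.inl ⟨rfl, rfl⟩)⟩
            exact step2.reachable
    haveI : Nonempty T.verts := ⟨⟨c, hc⟩⟩
    exact Connected.mk (fun x y => (hreach x).trans (hreach y).symm)
  · -- acyclic
    apply isAcyclic_of_nbr_unique (⟨c, hc⟩ : T.verts) (⟨d, hd⟩ : T.verts)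
    rintro ⟨v, hv⟩ hvc hvd w w' hw hw'
    have hvc' : v ≠ c := fun h => hvc (Subtype.ext h)
    have hvd' : v ≠ d := fun h => hvd (Subtype.ext h)
    have key : ∀ u : T.verts, T.coe.Adj ⟨v, hv⟩ u → (u : Fin n) = g v := by
      rintro ⟨u, hu⟩ hadj
      have hadj' : T.Adj v u := hadj
      obtain ⟨h1, h2, h3, h4⟩ := hadj'
      rcases h4 with (⟨h5, h6⟩ | ⟨_, _, rfl⟩) | (⟨h5, h6⟩ | ⟨huc, hud, h5⟩)
      · exact absurd h5 hvc'
      · rfl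
      · exact absurd h6 hvd'
      · rcases hgv u h3 huc hud with h | h <;> rw [h] at h5
        · exact absurd h5 hvc'
        · exact absurd h5 hvd'
    exact Subtype.ext ((key w hw).trans (key w' hw').symm)

lemma lower_family (n k : ℕ) (h2 : 2 ≤ k) (hkn : k ≤ n) (S : Set (Fin n)) (hS : S.ncard = k) :
    ∃ f : Fin (n - k + k / 2) → (⊤ : SimpleGraph (Fin n)).Subgraph,
      (∀ i, IsSteinerTree ⊤ S (f i)) ∧
      ∀ i j, i ≠ j → Disjoint (f i).edgeSet (f j).edgeSet := by
  classical
  -- enumerate S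
  have hFcard : S.toFinite.toFinset.card = k := by
    rw [← Set.ncard_eq_toFinset_card S S.toFinite, hS]
  set F := S.toFinite.toFinset with hF
  set eS := F.orderIsoOfFin hFcard with heS
  set σ : Fin k → Fin n := fun i => (eS i : Fin n) with hσ
  have hσ_mem : ∀ i, σ i ∈ S := by
    intro i
    have := (eS i).2
    rwa [Set.Finite.mem_toFinset] at this
  have hσ_inj : Function.Injective σ := fun a b h => by
    apply eS.injective; exact Subtype.ext h
  set ρ : Fin n → Fin k := fun v =>
    if h : v ∈ F then eS.symm ⟨v, h⟩ else ⟨0, by omega⟩ with hρ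
  have hσρ : ∀ v ∈ S, σ (ρ v) = v := by
    intro v hv
    have hvF : v ∈ F := by rwa [Set.Finite.mem_toFinset]
    simp only [hρ, dif_pos hvF, hσ]
    rw [OrderIso.apply_symm_apply]
  -- enumerate the complement
  have hc_card : (Sᶜ : Set (Fin n)).ncard = n - k := by
    have := Set.ncard_add_ncard_compl S
    rw [hS, Nat.card_eq_fintype_card, Fintype.card_fin] at this
    omega
  have hWcard : (Sᶜ : Set (Fin n)).toFinite.toFinset.card = n - k := by
    rw [← Set.ncard_eq_toFinset_card _ (Sᶜ : Set (Fin n)).toFinite, hc_card]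
  set Fc := (Sᶜ : Set (Fin n)).toFinite.toFinset with hFc
  set eW := Fc.orderIsoOfFin hWcard with heW
  set τ : Fin (n - k) → Fin n := fun i => (eW i : Fin n) with hτ
  have hτ_mem : ∀ i, τ i ∉ S := by
    intro i
    have := (eW i).2
    rwa [Set.Finite.mem_toFinset] at this
  have hτ_inj : Function.Injective τ := fun a b h => by
    apply eW.injective; exact Subtype.ext h
  -- index helpers
  have hj2 : ∀ j : Fin (k / 2), 2 * j.val < k := fun j => by have := j.2; omega
  have hj2' : ∀ j : Fin (k / 2), 2 * j.val + 1 < k := fun j => by have := j.2; omega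
  set c2 : Fin (k / 2) → Fin k := fun j => ⟨2 * j.val, hj2 j⟩ with hc2
  set c2' : Fin (k / 2) → Fin k := fun j => ⟨2 * j.val + 1, hj2' j⟩ with hc2'
  set σ0 : Fin n := σ ⟨0, by omega⟩ with hσ0
  set gj : Fin (k / 2) → Fin n → Fin n := fun j v =>
    if (j.val < (ρ v).val / 2 ↔ (ρ v).val % 2 = 0) then σ (c2 j) else σ (c2' j) with hgj
  -- the trees
  set trees : Fin (n - k) ⊕ Fin (k / 2) → (⊤ : SimpleGraph (Fin n)).Subgraph :=
    Sum.elim (fun w => dstar (τ w) σ0 (fun _ => τ w) (insert (τ w) S))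
      (fun j => dstar (σ (c2 j)) (σ (c2' j)) (gj j) S) with htrees
  have hgood_l : ∀ w, DGood (τ w) σ0 (fun _ => τ w) (insert (τ w) S) := by
    intro w
    refine ⟨Set.mem_insert _ _, Set.mem_insert_of_mem _ (hσ_mem _), ?_, fun v _ _ _ => Or.inl rfl⟩
    intro h
    exact hτ_mem w (h ▸ hσ_mem _)
  have hgood_r : ∀ j, DGood (σ (c2 j)) (σ (c2' j)) (gj j) S := by
    intro j
    refine ⟨hσ_mem _, hσ_mem _, ?_, ?_⟩
    · intro h
      have := hσ_inj h
      have : (c2 j).val = (c2' j).val := congrArg Fin.val this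
      simp only [hc2, hc2'] at this
      omega
    · intro v _ _ _
      simp only [hgj]
      split
      · exact Or.inl rfl
      · exact Or.inr rfl
  -- steiner tree property
  have hsteiner : ∀ x, IsSteinerTree ⊤ S (trees x) := by
    rintro (w | j)
    · exact ⟨fun v hv => Set.mem_insert_of_mem _ hv, dstar_isTree (hgood_l w)⟩
    · exact ⟨fun v hv => hv, dstar_isTree (hgood_r j)⟩
  -- edge classification
  have hinl : ∀ w e, e ∈ (trees (Sum.inl w)).edgeSet → ∃ u ∈ S, e = s(τ w, u) := by
    intro w e he
    rw [show trees (Sum.inl w) = dstar (τ w) σ0 (fun _ => τ w) (insert (τ w) S) from rfl,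
      dstar_mem_edgeSet (hgood_l w)] at he
    rcases he with rfl | ⟨v, hv, hvc, _, rfl⟩
    · exact ⟨σ0, hσ_mem _, rfl⟩
    · rcases Set.mem_insert_iff.mp hv with h | h
      · exact absurd h hvc
      · exact ⟨v, h, Sym2.eq_swap⟩
  have hinr : ∀ (j : Fin (k / 2)) e, e ∈ (trees (Sum.inr j)).edgeSet →
      ∃ a b : Fin k, e = s(σ a, σ b) ∧
        ((a.val = 2 * j.val ∧ b.val = 2 * j.val + 1) ∨
         (a.val / 2 ≠ j.val ∧
           ((b.val = 2 * j.val ∧ (j.val < a.val / 2 ↔ a.val % 2 = 0)) ∨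
            (b.val = 2 * j.val + 1 ∧ ¬(j.val < a.val / 2 ↔ a.val % 2 = 0))))) := by
    intro j e he
    rw [show trees (Sum.inr j) = dstar (σ (c2 j)) (σ (c2' j)) (gj j) S from rfl,
      dstar_mem_edgeSet (hgood_r j)] at he
    rcases he with rfl | ⟨v, hv, hvc, hvd, rfl⟩
    · exact ⟨c2 j, c2' j, rfl, Or.inl ⟨rfl, rfl⟩⟩
    · set i := ρ v with hi
      have hvi : σ i = v := hσρ v hv
      have hic : i.val ≠ 2 * j.val := by
        intro h
        exact hvc (by rw [← hvi]; congr 1; exact Fin.ext h)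
      have hid : i.val ≠ 2 * j.val + 1 := by
        intro h
        exact hvd (by rw [← hvi]; congr 1; exact Fin.ext h)
      have hdiv : i.val / 2 ≠ j.val := by omega
      by_cases hcond : (j.val < i.val / 2 ↔ i.val % 2 = 0)
      · refine ⟨i, c2 j, ?_, Or.inr ⟨hdiv, Or.inl ⟨rfl, hcond⟩⟩⟩
        rw [hvi]
        congr 1
        simp only [hgj, ← hi, if_pos hcond]
      · refine ⟨i, c2' j, ?_, Or.inr ⟨hdiv, Or.inr ⟨rfl, hcond⟩⟩⟩
        rw [hvi]
        congr 1
        simp only [hgj, ← hi, if_neg hcond]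
  -- sym2 equality helper
  have hsym : ∀ a b a' b' : Fin k, s(σ a, σ b) = s(σ a', σ b') →
      (a.val = a'.val ∧ b.val = b'.val) ∨ (a.val = b'.val ∧ b.val = a'.val) := by
    intro a b a' b' h
    rw [Sym2.eq_iff] at h
    rcases h with ⟨h1, h2⟩ | ⟨h1, h2⟩
    · exact Or.inl ⟨congrArg Fin.val (hσ_inj h1), congrArg Fin.val (hσ_inj h2)⟩
    · exact Or.inr ⟨congrArg Fin.val (hσ_inj h1), congrArg Fin.val (hσ_inj h2)⟩
  -- pairwise disjointness
  have hdisjlr : ∀ w j, Disjoint (trees (Sum.inl w)).edgeSet (trees (Sum.inr j)).edgeSet := by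
    intro w j
    rw [Set.disjoint_left]
    intro e he he'
    obtain ⟨u, hu, rfl⟩ := hinl w e he
    obtain ⟨a, b, heq, _⟩ := hinr j _ he'
    rw [Sym2.eq_iff] at heq
    rcases heq with ⟨h1, _⟩ | ⟨h1, _⟩
    · exact hτ_mem w (h1 ▸ hσ_mem a)
    · exact hτ_mem w (h1 ▸ hσ_mem b)
  have hdisj : ∀ x y, x ≠ y → Disjoint (trees x).edgeSet (trees y).edgeSet := by
    rintro (w | j) (w' | j') hxy
    · rw [Set.disjoint_left]
      intro e he he'
      obtain ⟨u, hu, rfl⟩ := hinl w e he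
      obtain ⟨u', hu', heq⟩ := hinl w' _ he'
      rw [Sym2.eq_iff] at heq
      rcases heq with ⟨h1, _⟩ | ⟨h1, h2⟩
      · exact hxy (by rw [hτ_inj h1])
      · exact hτ_mem w (h1 ▸ hu')
    · exact hdisjlr w j'
    · exact (hdisjlr w' j).symm
    · have hjj' : j.val ≠ j'.val := fun h => hxy (by rw [show j = j' from Fin.ext h])
      rw [Set.disjoint_left]
      intro e he he'
      obtain ⟨a, b, rfl, hP⟩ := hinr j e he
      obtain ⟨a', b', heq, hP'⟩ := hinr j' _ he'
      have := hsym a b a' b' heq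
      omega
  refine ⟨fun i => trees (finSumFinEquiv.symm (Fin.cast (by omega) i)), fun i => hsteiner _,
    fun i j hij => hdisj _ _ ?_⟩
  intro h
  apply hij
  have := congrArg finSumFinEquiv h
  simp only [Equiv.apply_symm_apply] at this
  exact Fin.ext (by have := congrArg Fin.val this; simpa using this)

lemma sum_ncard_le {ι α : Type*} (s : Finset ι) (A : ι → Set α) (B : Set α)
    (hB : B.Finite) (hsub : ∀ i ∈ s, A i ⊆ B)
    (hdisj : ∀ i ∈ s, ∀ j ∈ s, i ≠ j → Disjoint (A i) (A j)) :
    ∑ i ∈ s, (A i).ncard ≤ B.ncard := by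
  classical
  induction s using Finset.induction_on generalizing B with
  | empty => simp
  | @insert a s' ha ih =>
    rw [Finset.sum_insert ha]
    have h1 : A a ⊆ B := hsub a (Finset.mem_insert_self _ _)
    have h2 : ∀ i ∈ s', A i ⊆ B \ A a := by
      intro i hi x hx
      refine ⟨hsub i (Finset.mem_insert_of_mem hi) hx, fun hxa => ?_⟩
      exact Set.disjoint_left.mp
        (hdisj a (Finset.mem_insert_self _ _) i (Finset.mem_insert_of_mem hi)
          (fun h => ha (h ▸ hi))) hxa hx
    have ih' := ih (B \ A a) hB.diff h2
      (fun i hi j hj hij => hdisj i (Finset.mem_insert_of_mem hi) j (Finset.mem_insert_of_mem hj) hij)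
    have := Set.ncard_diff_add_ncard_of_subset h1 hB
    have hle : (A a).ncard + ∑ i ∈ s', (A i).ncard ≤ (A a).ncard + (B \ A a).ncard := by omega
    omega

lemma ncard_inside {n : ℕ} (S : Set (Fin n)) :
    2 * {e : Sym2 (Fin n) | ¬e.IsDiag ∧ ∀ x ∈ e, x ∈ S}.ncard = S.ncard * (S.ncard - 1) := by
  classical
  haveI : Fintype ↥S := Fintype.ofFinite _
  haveI : Fintype (⊤ : SimpleGraph ↥S).edgeSet := Fintype.ofFinite _
  have himg : Sym2.map (Subtype.val : ↥S → Fin n) '' (⊤ : SimpleGraph ↥S).edgeSet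
      = {e : Sym2 (Fin n) | ¬e.IsDiag ∧ ∀ x ∈ e, x ∈ S} := by
    ext e
    constructor
    · rintro ⟨e', he', rfl⟩
      induction e' with
      | h a b =>
        have hab : a ≠ b := he'
        refine ⟨by simpa [Sym2.mk_isDiag_iff] using fun h => hab (Subtype.ext h), ?_⟩
        intro x hx
        rw [Sym2.map_pair_eq, Sym2.mem_iff] at hx
        rcases hx with rfl | rfl
        · exact a.2
        · exact b.2
    · intro he
      induction e with
      | h x y =>
        obtain ⟨hd, hmem⟩ := he
        have hx : x ∈ S := hmem x (Sym2.mem_mk_left _ _)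
        have hy : y ∈ S := hmem y (Sym2.mem_mk_right _ _)
        have hxy : x ≠ y := fun h => hd (by rw [h]; exact Sym2.mk_isDiag_iff.mpr rfl)
        exact ⟨s(⟨x, hx⟩, ⟨y, hy⟩), by
          simp only [SimpleGraph.mem_edgeSet, top_adj]
          exact fun h => hxy (congrArg Subtype.val h), by rw [Sym2.map_pair_eq]⟩
  rw [← himg, Set.ncard_image_of_injective _ (Sym2.map.injective Subtype.coe_injective)]
  have h1 : (⊤ : SimpleGraph ↥S).edgeSet.ncard = (Fintype.card ↥S).choose 2 := by
    rw [Set.ncard_eq_toFinset_card']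
    simpa [SimpleGraph.edgeFinset] using SimpleGraph.card_edgeFinset_top_eq_card_choose_two (V := ↥S)
  have h2 : Fintype.card ↥S = S.ncard := by
    rw [← Nat.card_coe_set_eq, Nat.card_eq_fintype_card]
  rw [h1, h2, Nat.choose_two_right]
  have : 2 ∣ S.ncard * (S.ncard - 1) := by
    rcases Nat.even_or_odd S.ncard with h | h
    · exact Dvd.dvd.mul_right h.two_dvd _
    · rcases h with ⟨m, hm⟩
      refine Dvd.dvd.mul_left ⟨m, by omega⟩ _
  omega

lemma ncard_cross {n : ℕ} (S : Set (Fin n)) :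
    {e : Sym2 (Fin n) | ∃ x y, e = s(x, y) ∧ x ∈ S ∧ y ∉ S}.ncard
      = S.ncard * (Sᶜ : Set (Fin n)).ncard := by
  classical
  set ψ : ↥S × ↥(Sᶜ : Set (Fin n)) → Sym2 (Fin n) := fun p => s(p.1.1, p.2.1) with hψ
  have hinj : Function.Injective ψ := by
    rintro ⟨⟨a, ha⟩, ⟨b, hb⟩⟩ ⟨⟨a', ha'⟩, ⟨b', hb'⟩⟩ h
    simp only [hψ, Sym2.eq_iff] at h
    rcases h with ⟨h1, h2⟩ | ⟨h1, h2⟩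
    · simp [Prod.ext_iff, Subtype.ext_iff, h1, h2]
    · subst h1; exact absurd ha hb'
  have hrange : Set.range ψ = {e : Sym2 (Fin n) | ∃ x y, e = s(x, y) ∧ x ∈ S ∧ y ∉ S} := by
    ext e
    constructor
    · rintro ⟨⟨⟨a, ha⟩, ⟨b, hb⟩⟩, rfl⟩
      exact ⟨a, b, rfl, ha, hb⟩
    · rintro ⟨x, y, rfl, hx, hy⟩
      exact ⟨(⟨x, hx⟩, ⟨y, hy⟩), rfl⟩
  rw [← hrange, ← Set.image_univ, Set.ncard_image_of_injective _ hinj, Set.ncard_univ,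
    Nat.card_prod, Nat.card_coe_set_eq, Nat.card_coe_set_eq]

lemma typeI_count {n : ℕ} {S : Set (Fin n)} {T : (⊤ : SimpleGraph (Fin n)).Subgraph}
    (hT : T.coe.IsTree) (h1 : S ⊆ T.verts) (h2 : T.verts ⊆ S) :
    T.edgeSet.ncard + 1 = S.ncard := by
  classical
  haveI : Fintype ↥T.verts := Fintype.ofFinite _
  haveI : Fintype T.coe.edgeSet := Fintype.ofFinite _
  have hST : T.verts = S := Set.Subset.antisymm h2 h1
  have hnc : Nat.card ↥T.verts = Nat.card ↥S := by rw [hST]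
  have hcv : Fintype.card ↥T.verts = S.ncard := by
    rw [← Nat.card_eq_fintype_card, hnc, Nat.card_coe_set_eq]
  have hcard := hT.card_edgeFinset
  rw [hcv] at hcard
  have hES : T.edgeSet.ncard = T.coe.edgeSet.ncard := by
    rw [← T.image_coe_edgeSet_coe,
      Set.ncard_image_of_injective _ (Sym2.map.injective Subtype.coe_injective)]
  rw [hES, Set.ncard_eq_toFinset_card']
  have : T.coe.edgeSet.toFinset.card = T.coe.edgeFinset.card := by
    simp [SimpleGraph.edgeFinset]
  rw [this, hcard]

lemma typeII_count {n : ℕ} {S : Set (Fin n)} {T : (⊤ : SimpleGraph (Fin n)).Subgraph}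
    (hT : T.coe.IsTree) (hS1 : S ⊆ T.verts) {r : Fin n} (hr : r ∈ T.verts) (hrS : r ∉ S) :
    S.ncard ≤ {e ∈ T.edgeSet | ∃ x ∈ e, x ∈ S}.ncard := by
  classical
  set G' := T.coe with hG'
  have hconn : G'.Connected := hT.isConnected
  set r' : ↥T.verts := ⟨r, hr⟩ with hr'
  have key : ∀ v : ↥T.verts, v ≠ r' → ∃ w, G'.Adj v w ∧ G'.dist w r' < G'.dist v r' := by
    intro v hv
    obtain ⟨p, hp⟩ := (hconn.preconnected v r').exists_walk_length_eq_dist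
    cases p with
    | nil => exact absurd rfl hv
    | cons h q =>
      refine ⟨_, h, ?_⟩
      have hq := SimpleGraph.dist_le q
      rw [Walk.length_cons] at hp
      omega
  choose w hw1 hw2 using key
  have hne : ∀ v (h : v ∈ S), (⟨v, hS1 h⟩ : ↥T.verts) ≠ r' := by
    intro v h heq
    exact hrS (by
      have := congrArg Subtype.val heq
      simp only [hr'] at this
      rwa [this] at h)
  set F : Fin n → Sym2 (Fin n) := fun v =>
    if h : v ∈ S then s(v, (w ⟨v, hS1 h⟩ (hne v h) : Fin n)) else s(v, v) with hF
  have hFsub : F '' S ⊆ {e ∈ T.edgeSet | ∃ x ∈ e, x ∈ S} := by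
    rintro e ⟨v, hv, rfl⟩
    simp only [hF, dif_pos hv]
    refine ⟨?_, v, Sym2.mem_mk_left _ _, hv⟩
    have := hw1 ⟨v, hS1 hv⟩ (hne v hv)
    rw [Subgraph.coe_adj] at this
    exact this
  have hFinj : Set.InjOn F S := by
    intro v1 h1 v2 h2 heq
    simp only [hF, dif_pos h1, dif_pos h2, Sym2.eq_iff] at heq
    rcases heq with ⟨h, _⟩ | ⟨ha, hb⟩
    · exact h
    · exfalso
      have e1 : (⟨v1, hS1 h1⟩ : ↥T.verts) = w ⟨v2, hS1 h2⟩ (hne v2 h2) := Subtype.ext ha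
      have e2 : (⟨v2, hS1 h2⟩ : ↥T.verts) = w ⟨v1, hS1 h1⟩ (hne v1 h1) := Subtype.ext hb.symm
      have d1 := hw2 ⟨v1, hS1 h1⟩ (hne v1 h1)
      have d2 := hw2 ⟨v2, hS1 h2⟩ (hne v2 h2)
      rw [← e2] at d1
      rw [← e1] at d2
      omega
  calc S.ncard = (F '' S).ncard := (Set.ncard_image_of_injOn hFinj).symm
    _ ≤ _ := Set.ncard_le_ncard hFsub (Set.toFinite _)

lemma upper_bound (n k : ℕ) (h2 : 2 ≤ k) (hkn : k ≤ n) (S : Set (Fin n)) (hS : S.ncard = k)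
    (t : ℕ) (f : Fin t → (⊤ : SimpleGraph (Fin n)).Subgraph)
    (hf : ∀ i, IsSteinerTree ⊤ S (f i))
    (hd : ∀ i j, i ≠ j → Disjoint (f i).edgeSet (f j).edgeSet) :
    2 * t + k ≤ 2 * n := by
  classical
  set In : Fin t → Set (Sym2 (Fin n)) :=
    fun i => {e ∈ (f i).edgeSet | ∀ x ∈ e, x ∈ S} with hIn
  set Cr : Fin t → Set (Sym2 (Fin n)) :=
    fun i => {e ∈ (f i).edgeSet | (∃ x ∈ e, x ∈ S) ∧ ¬(∀ x ∈ e, x ∈ S)} with hCr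
  set InSet := {e : Sym2 (Fin n) | ¬e.IsDiag ∧ ∀ x ∈ e, x ∈ S} with hInSet
  set CrSet := {e : Sym2 (Fin n) | ∃ x y, e = s(x, y) ∧ x ∈ S ∧ y ∉ S} with hCrSet
  -- subset facts
  have hInSub : ∀ i, In i ⊆ InSet := by
    intro i e he
    exact ⟨SimpleGraph.not_isDiag_of_mem_edgeSet _ ((f i).edgeSet_subset he.1), he.2⟩
  have hCrSub : ∀ i, Cr i ⊆ CrSet := by
    intro i e he
    obtain ⟨he1, ⟨x0, hx0, hx0S⟩, hnall⟩ := he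
    induction e with
    | h x y =>
      by_cases hx : x ∈ S
      · by_cases hy : y ∈ S
        · exact absurd (fun z hz => by
            rcases Sym2.mem_iff.mp hz with rfl | rfl <;> assumption) hnall
        · exact ⟨x, y, rfl, hx, hy⟩
      · have hy : y ∈ S := by
          rcases Sym2.mem_iff.mp hx0 with rfl | rfl
          · exact absurd hx0S hx
          · exact hx0S
        exact ⟨y, x, Sym2.eq_swap.symm, hy, hx⟩
  have hInEdge : ∀ i, In i ⊆ (f i).edgeSet := fun i e he => he.1
  have hCrEdge : ∀ i, Cr i ⊆ (f i).edgeSet := fun i e he => he.1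
  -- the filter
  set I : Finset (Fin t) := Finset.univ.filter (fun i => (f i).verts ⊆ S) with hI
  set Ic : Finset (Fin t) := Finset.univ.filter (fun i => ¬((f i).verts ⊆ S)) with hIc
  have hIcard : I.card + Ic.card = t := by
    rw [hI, hIc, Finset.card_filter_add_card_filter_not]
    simp
  -- per tree counts
  have htypeI : ∀ i ∈ I, (In i).ncard = k - 1 := by
    intro i hi
    have hisub : (f i).verts ⊆ S := by simpa [hI] using hi
    have heq : In i = (f i).edgeSet := by
      apply Set.Subset.antisymm (hInEdge i)
      intro e he
      refine ⟨he, fun x hx => hisub (Subgraph.mem_verts_of_mem_edge he hx)⟩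
    have := typeI_count (hf i).2 (hf i).1 hisub
    rw [hS] at this
    rw [heq]
    omega
  have htypeII : ∀ i ∈ Ic, k ≤ (In i).ncard + (Cr i).ncard := by
    intro i hi
    have hnsub : ¬((f i).verts ⊆ S) := by simpa [hIc] using hi
    obtain ⟨r, hr, hrS⟩ := Set.not_subset.mp hnsub
    have hcount := typeII_count (hf i).2 (hf i).1 hr hrS
    rw [hS] at hcount
    have hsplit : {e ∈ (f i).edgeSet | ∃ x ∈ e, x ∈ S} ⊆ In i ∪ Cr i := by
      intro e he
      by_cases hall : ∀ x ∈ e, x ∈ S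
      · exact Or.inl ⟨he.1, hall⟩
      · exact Or.inr ⟨he.1, he.2, hall⟩
    calc k ≤ _ := hcount
      _ ≤ (In i ∪ Cr i).ncard := Set.ncard_le_ncard hsplit (Set.toFinite _)
      _ ≤ _ := Set.ncard_union_le _ _
  -- global budgets
  have hInBudget : ∑ i ∈ Finset.univ, (In i).ncard ≤ InSet.ncard := by
    apply sum_ncard_le _ _ _ (Set.toFinite _) (fun i _ => hInSub i)
    intro i _ j _ hij
    exact Set.disjoint_of_subset (hInEdge i) (hInEdge j) (hd i j hij)
  have hCrBudget : ∑ i ∈ Finset.univ, (Cr i).ncard ≤ CrSet.ncard := by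
    apply sum_ncard_le _ _ _ (Set.toFinite _) (fun i _ => hCrSub i)
    intro i _ j _ hij
    exact Set.disjoint_of_subset (hCrEdge i) (hCrEdge j) (hd i j hij)
  -- sums split
  have hsplitIn : ∑ i ∈ I, (In i).ncard + ∑ i ∈ Ic, (In i).ncard
      = ∑ i ∈ Finset.univ, (In i).ncard := by
    rw [hI, hIc]
    exact Finset.sum_filter_add_sum_filter_not _ _ _
  have hsumI : ∑ i ∈ I, (In i).ncard = I.card * (k - 1) := by
    rw [Finset.sum_congr rfl htypeI, Finset.sum_const, smul_eq_mul]
  have hsumII : Ic.card * k ≤ ∑ i ∈ Ic, (In i).ncard + ∑ i ∈ Ic, (Cr i).ncard := by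
    rw [← Finset.sum_add_distrib]
    calc Ic.card * k = ∑ _i ∈ Ic, k := by rw [Finset.sum_const, smul_eq_mul]
      _ ≤ _ := Finset.sum_le_sum htypeII
  have hsumCrle : ∑ i ∈ Ic, (Cr i).ncard ≤ ∑ i ∈ Finset.univ, (Cr i).ncard :=
    Finset.sum_le_sum_of_subset (Finset.subset_univ _)
  -- cross budget value
  have hcompl : (Sᶜ : Set (Fin n)).ncard = n - k := by
    have := Set.ncard_add_ncard_compl S
    rw [hS, Nat.card_eq_fintype_card, Fintype.card_fin] at this
    omega
  have hcrossval : CrSet.ncard = k * (n - k) := by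
    rw [hCrSet, ncard_cross, hS, hcompl]
  have hinval : 2 * InSet.ncard = k * (k - 1) := by
    rw [hInSet, ncard_inside, hS]
  -- arithmetic
  obtain ⟨K, rfl⟩ : ∃ K, k = K + 1 := ⟨k - 1, by omega⟩
  obtain ⟨m, hm⟩ : ∃ m, n = (K + 1) + m := ⟨n - (K+1), by omega⟩
  subst hm
  have hK : 1 ≤ K := by omega
  have e1 : I.card * K + ∑ i ∈ Ic, (In i).ncard ≤ InSet.ncard := by
    have : I.card * (K + 1 - 1) = I.card * K := by norm_num
    omega
  have e2 : ∑ i ∈ Ic, (Cr i).ncard ≤ (K + 1) * m := by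
    have hmm : (K + 1) + m - (K + 1) = m := by omega
    rw [hmm] at hcrossval
    omega
  have e3 := hsumII
  have hin' : 2 * InSet.ncard = (K + 1) * K := by
    have hmm : K + 1 - 1 = K := by omega
    rw [hmm] at hinval
    exact hinval
  have h2t1 : 2 * I.card ≤ K + 1 := by
    have h5 : 2 * (I.card * K) ≤ (K + 1) * K := by omega
    have h6 : (2 * I.card) * K ≤ (K + 1) * K := by
      calc (2 * I.card) * K = 2 * (I.card * K) := by ring
        _ ≤ _ := h5
    exact Nat.le_of_mul_le_mul_right h6 (by omega)
  have e4 : 2 * (I.card + Ic.card) * (K + 1) ≤ (K + 1 + 2 * m) * (K + 1) := by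
    nlinarith [e1, e2, e3, h2t1, hin']
  have e5 : 2 * (I.card + Ic.card) ≤ K + 1 + 2 * m :=
    Nat.le_of_mul_le_mul_right e4 (by omega)
  omega



lemma steiner_edge_nonempty {n : ℕ} {S : Set (Fin n)} (hS : 2 ≤ S.ncard)
    {T : (⊤ : SimpleGraph (Fin n)).Subgraph} (hT : IsSteinerTree ⊤ S T) :
    T.edgeSet.Nonempty := by
  obtain ⟨u, v, hu, hv, huv⟩ := (Set.one_lt_ncard_iff (Set.toFinite S)).mp (by omega)
  have hu' : u ∈ T.verts := hT.1 hu
  have hv' : v ∈ T.verts := hT.1 hv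
  have hne : (⟨u, hu'⟩ : ↥T.verts) ≠ ⟨v, hv'⟩ := fun h => huv (congrArg Subtype.val h)
  obtain ⟨p⟩ := hT.2.isConnected.preconnected ⟨u, hu'⟩ ⟨v, hv'⟩
  cases p with
  | nil => exact absurd rfl hne
  | cons h q =>
    rw [Subgraph.coe_adj] at h
    exact ⟨_, Subgraph.mem_edgeSet.mpr h⟩

lemma steiner_set_bddAbove {n : ℕ} {S : Set (Fin n)} (hS : 2 ≤ S.ncard) :
    BddAbove {m : ℕ | ∃ f : Fin m → (⊤ : SimpleGraph (Fin n)).Subgraph,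
      (∀ i, IsSteinerTree ⊤ S (f i)) ∧
      ∀ i j, i ≠ j → Disjoint (f i).edgeSet (f j).edgeSet} := by
  classical
  refine ⟨Fintype.card (Sym2 (Fin n)), ?_⟩
  rintro m ⟨f, hf, hd⟩
  have hne : ∀ i, (f i).edgeSet.Nonempty := fun i => steiner_edge_nonempty hS (hf i)
  choose e he using hne
  have hinj : Function.Injective e := by
    intro i j hij
    by_contra hij'
    exact Set.disjoint_left.mp (hd i j hij') (he i) (hij ▸ he j)
  simpa using Fintype.card_le_of_injective e hinj

lemma steiner_val (n k : ℕ) (h2 : 2 ≤ k) (hkn : k ≤ n) (S : Set (Fin n)) (hS : S.ncard = k) :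
    steinerEdgeConn (⊤ : SimpleGraph (Fin n)) S = n - (k + 1) / 2 := by
  apply le_antisymm
  · apply csSup_le
    · exact ⟨0, Fin.elim0, fun i => i.elim0, fun i j _ => i.elim0⟩
    · rintro m ⟨f, hf, hd⟩
      have := upper_bound n k h2 hkn S hS m f hf hd
      omega
  · have hmem : (n - k + k / 2) ∈ {m : ℕ | ∃ f : Fin m → (⊤ : SimpleGraph (Fin n)).Subgraph,
        (∀ i, IsSteinerTree ⊤ S (f i)) ∧
        ∀ i j, i ≠ j → Disjoint (f i).edgeSet (f j).edgeSet} :=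
      lower_family n k h2 hkn S hS
    have hbdd := @steiner_set_bddAbove n S (show 2 ≤ S.ncard by omega)
    have hle := le_csSup hbdd hmem
    have htest : n - (k + 1) / 2 ≤ n - k + k / 2 := by clear hle hmem hbdd; omega
    exact le_trans htest hle


end Aux

theorem genEdgeConn_complete (n k : ℕ) (h2 : 2 ≤ k) (hkn : k ≤ n) :
    genEdgeConn (⊤ : SimpleGraph (Fin n)) k = n - (k + 1) / 2 := by
  have hSset : {m : ℕ | ∃ S : Set (Fin n), S.ncard = k ∧
      steinerEdgeConn (⊤ : SimpleGraph (Fin n)) S = m} = {n - (k + 1) / 2} := by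
    ext m
    constructor
    · rintro ⟨S, hS, rfl⟩
      exact steiner_val n k h2 hkn S hS
    · rintro rfl
      have hinj : Function.Injective (Fin.castLE hkn) := fun a b h => by
        apply Fin.ext
        have := congrArg Fin.val h
        simpa using this
      refine ⟨Set.range (Fin.castLE hkn), ?_, ?_⟩
      · rw [← Set.image_univ, Set.ncard_image_of_injective _ hinj, Set.ncard_univ,
          Nat.card_eq_fintype_card, Fintype.card_fin]
      · exact steiner_val n k h2 hkn _ (by
          rw [← Set.image_univ, Set.ncard_image_of_injective _ hinj, Set.ncard_univ,
            Nat.card_eq_fintype_card, Fintype.card_fin])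
  rw [genEdgeConn, hSset, csInf_singleton]
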